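/- Let A be a local Artinian ring whose residue field is perfect. Then the Contou-Carrère symbol is alternating in the sense that ⟨f, g⟩ · ⟨g, f⟩ = 1 for all units f, g of A((t)). -/

import Mathlib

/-- The data of a Witt-coordinate decomposition of a unit of `A((t))` over a local ring
`A` (Definition 4.6): a winding number `w`, a leading unit `a₀`, the positive Witt
coordinates (`pos i` records `a_{i+1}`), and the finitely many negative Witt coordinates
(`neg i` records `a_{-(i+1)}`), all lying in the maximal ideal. -/
structure CCData (A : Type*) [CommRing A] [IsLocalRing A] where
  w : ℤ
  a0 : Aˣ
  pos : ℕ → A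
  neg : ℕ →₀ A
  neg_mem : ∀ i, neg i ∈ IsLocalRing.maximalIdeal A

/-- The truncated product `a₀ t^w ∏_{i=1}^{N} (1 − aᵢ tⁱ) ∏_{i≥1} (1 − a_{-i} t^{-i})`
attached to a Witt-coordinate datum. -/
noncomputable def CCData.approx {A : Type*} [CommRing A] [IsLocalRing A]
    (d : CCData A) (N : ℕ) : LaurentSeries A :=
  HahnSeries.single d.w (d.a0 : A)
    * ∏ i ∈ Finset.range N, (1 - HahnSeries.single ((i : ℤ) + 1) (d.pos i))
    * d.neg.prod fun i c => 1 - HahnSeries.single (-((i : ℤ) + 1)) c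

/-- `d` is the Witt-coordinate decomposition of `f ∈ A((t))`: for every `N ≥ 1`,
`f` is congruent to the truncated product modulo `t^{w+N+1} A[[t]]`, i.e. all
coefficients of index `≤ w + N` agree. -/
def CCData.IsDecompositionOf {A : Type*} [CommRing A] [IsLocalRing A]
    (d : CCData A) (f : LaurentSeries A) : Prop :=
  ∀ N : ℕ, 1 ≤ N → ∀ k : ℤ, k ≤ d.w + (N : ℤ) → f.coeff k = (d.approx N).coeff k

/-- Integer powers of a ring element, the inverse being taken in the sense of
`Ring.inverse` (this agrees with the usual integer power of a unit). -/
noncomputable def ringZPow {A : Type*} [CommRing A] (x : A) (n : ℤ) : A :=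
  if 0 ≤ n then x ^ n.toNat else Ring.inverse (x ^ (-n).toNat)

/-- The Contou-Carrère symbol of two Witt-coordinate data `d`, `e`:
`(−1)^{w(f)w(g)} a₀^{w(g)} b₀^{−w(f)} ∏_{i,j≥1} (1 − aᵢ^{j/(i,j)} b_{−j}^{i/(i,j)})^{(i,j)}
∏_{i,j≥1} (1 − a_{−i}^{j/(i,j)} bⱼ^{i/(i,j)})^{−(i,j)}`, where `(i,j) = gcd(i,j)`;
the double products have only finitely many factors `≠ 1` and are interpreted as
`finprod`s. -/
noncomputable def CCData.symbol {A : Type*} [CommRing A] [IsLocalRing A]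
    (d e : CCData A) : A :=
  ringZPow (-1 : A) (d.w * e.w) * ringZPow (d.a0 : A) e.w * ringZPow (e.a0 : A) (-d.w)
    * (∏ᶠ i : ℕ, ∏ᶠ j : ℕ,
        ringZPow
          (1 - d.pos i ^ ((j + 1) / Nat.gcd (i + 1) (j + 1))
            * e.neg j ^ ((i + 1) / Nat.gcd (i + 1) (j + 1)))
          (Nat.gcd (i + 1) (j + 1)))
    * (∏ᶠ i : ℕ, ∏ᶠ j : ℕ,
        ringZPow
          (1 - d.neg i ^ ((j + 1) / Nat.gcd (i + 1) (j + 1))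
            * e.pos j ^ ((i + 1) / Nat.gcd (i + 1) (j + 1)))
          (-(Nat.gcd (i + 1) (j + 1) : ℤ)))

open scoped Classical in
/-- The Contou-Carrère symbol `⟨f, g⟩ ∈ A` of `f, g ∈ A((t))`, defined through the
(unique) Witt-coordinate decompositions of `f` and `g` (and equal to `1` by convention
if one of them admits no decomposition, which does not happen for units over a local
Artinian ring). -/
noncomputable def ccSymbol (A : Type*) [CommRing A] [IsLocalRing A]
    (f g : LaurentSeries A) : A :=
  if h : (∃ d : CCData A, d.IsDecompositionOf f) ∧ (∃ e : CCData A, e.IsDecompositionOf g)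
    then (h.1.choose).symbol h.2.choose else 1


set_option linter.unusedSectionVars false

section Aux
variable {A : Type*} [CommRing A] [IsLocalRing A]

lemma ringZPow_one_base (n : ℤ) : ringZPow (1 : A) n = 1 := by
  unfold ringZPow; split <;> simp

lemma ringZPow_mul_ringZPow_neg {x : A} (hx : IsUnit x) (n : ℤ) :
    ringZPow x n * ringZPow x (-n) = 1 := by
  unfold ringZPow
  rcases lt_trichotomy n 0 with h | h | h
  · rw [if_neg (by omega), if_pos (by omega)]
    exact Ring.inverse_mul_cancel _ (hx.pow _)
  · subst h; simp
  · rw [if_pos (by omega), if_neg (by omega), neg_neg]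
    exact Ring.mul_inverse_cancel _ (hx.pow _)

lemma ringZPow_neg_one_sq (n : ℤ) :
    ringZPow (-1 : A) n * ringZPow (-1 : A) n = 1 := by
  unfold ringZPow
  split
  · rw [← mul_pow]; simp
  · set y : A := (-1 : A) ^ (-n).toNat with hy
    have h1 : y * y = 1 := by rw [hy, ← mul_pow]; simp
    have hu : IsUnit y := IsUnit.of_mul_eq_one _ h1
    have h2 : Ring.inverse y = y := by
      calc Ring.inverse y = (y * y) * Ring.inverse y := by rw [h1, one_mul]
        _ = y * (y * Ring.inverse y) := by ring
        _ = y := by rw [Ring.mul_inverse_cancel _ hu, mul_one]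
    rw [h2]; exact h1

lemma mul5 {x1 x2 x3 x4 x5 y1 y2 y3 y4 y5 : A}
    (h1 : x1 * y1 = 1) (h2 : x2 * y3 = 1) (h3 : x3 * y2 = 1)
    (h4 : x4 * y5 = 1) (h5 : x5 * y4 = 1) :
    x1 * x2 * x3 * x4 * x5 * (y1 * y2 * y3 * y4 * y5) = 1 := by
  have : x1 * x2 * x3 * x4 * x5 * (y1 * y2 * y3 * y4 * y5)
      = (x1 * y1) * (x2 * y3) * (x3 * y2) * (x4 * y5) * (x5 * y4) := by ring
  rw [this, h1, h2, h3, h4, h5]; ring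

/-- double finprod pairing lemma -/
lemma double_finprod_pair (F H : ℕ → ℕ → A) (s : Finset ℕ)
    (hF : ∀ i j, F i j ≠ 1 → i ∈ s ∧ j ∈ s)
    (hH : ∀ i j, H i j ≠ 1 → i ∈ s ∧ j ∈ s)
    (hFH : ∀ i j, F i j * H j i = 1) :
    (∏ᶠ i, ∏ᶠ j, F i j) * (∏ᶠ i, ∏ᶠ j, H i j) = 1 := by
  have hFin : ∀ i, (∏ᶠ j, F i j) = ∏ j ∈ s, F i j := fun i =>
    finprod_eq_prod_of_mulSupport_subset _ (fun j hj => (hF i j hj).2)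
  have hHin : ∀ i, (∏ᶠ j, H i j) = ∏ j ∈ s, H i j := fun i =>
    finprod_eq_prod_of_mulSupport_subset _ (fun j hj => (hH i j hj).2)
  have hFout : (∏ᶠ i, ∏ᶠ j, F i j) = ∏ i ∈ s, ∏ j ∈ s, F i j := by
    rw [funext hFin]
    refine finprod_eq_prod_of_mulSupport_subset _ (fun i hi => ?_)
    by_contra hin
    exact hi (Finset.prod_eq_one fun j _ => by
      by_contra hne; exact hin (hF i j hne).1)
  have hHout : (∏ᶠ i, ∏ᶠ j, H i j) = ∏ i ∈ s, ∏ j ∈ s, H i j := by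
    rw [funext hHin]
    refine finprod_eq_prod_of_mulSupport_subset _ (fun i hi => ?_)
    by_contra hin
    exact hi (Finset.prod_eq_one fun j _ => by
      by_contra hne; exact hin (hH i j hne).1)
  rw [hFout, hHout, Finset.prod_comm (f := fun i j => H i j)]
  rw [← Finset.prod_mul_distrib]
  refine Finset.prod_eq_one fun i _ => ?_
  rw [← Finset.prod_mul_distrib]
  exact Finset.prod_eq_one fun j _ => hFH i j

end Aux

section Main
variable {A : Type*} [CommRing A] [IsLocalRing A] [IsArtinianRing A]

private lemma exists_nilp : ∃ n : ℕ, 1 ≤ n ∧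
    ∀ x ∈ IsLocalRing.maximalIdeal A, ∀ k, n ≤ k → x ^ k = 0 := by
  obtain ⟨n, hn⟩ := IsArtinianRing.isNilpotent_jacobson_bot (R := A)
  rw [IsLocalRing.jacobson_eq_maximalIdeal (⊥ : Ideal A) bot_ne_top] at hn
  refine ⟨n + 1, le_add_self, fun x hx k hk => ?_⟩
  have h1 : x ^ k ∈ (IsLocalRing.maximalIdeal A) ^ k := Ideal.pow_mem_pow hx k
  have h2 : (IsLocalRing.maximalIdeal A) ^ k ≤ (IsLocalRing.maximalIdeal A) ^ n :=
    Ideal.pow_le_pow_right (by omega)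
  have h3 := h2 h1
  rw [hn] at h3
  simpa using h3

/-- The first double product of `d.symbol e` cancels against the
second double product of `e.symbol d`. -/
private lemma pairing (d e : CCData A) :
    (∏ᶠ i : ℕ, ∏ᶠ j : ℕ,
        ringZPow
          (1 - d.pos i ^ ((j + 1) / Nat.gcd (i + 1) (j + 1))
            * e.neg j ^ ((i + 1) / Nat.gcd (i + 1) (j + 1)))
          (Nat.gcd (i + 1) (j + 1)))
    * (∏ᶠ i : ℕ, ∏ᶠ j : ℕ,
        ringZPow
          (1 - e.neg i ^ ((j + 1) / Nat.gcd (i + 1) (j + 1))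
            * d.pos j ^ ((i + 1) / Nat.gcd (i + 1) (j + 1)))
          (-(Nat.gcd (i + 1) (j + 1) : ℤ))) = 1 := by
  obtain ⟨n, hn1, hn⟩ := exists_nilp (A := A)
  set J : ℕ := e.neg.support.sup id with hJ
  set M : ℕ := n * (J + 1) with hM
  have key : ∀ i j : ℕ, e.neg j ^ ((i + 1) / Nat.gcd (i + 1) (j + 1)) ≠ 0 →
      i ∈ Finset.range M ∧ j ∈ Finset.range M := by
    intro i j hne
    have hgpos : 0 < Nat.gcd (i + 1) (j + 1) := Nat.gcd_pos_of_pos_left _ (Nat.succ_pos i)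
    have hjJ : j ≤ J := by
      have hb : 1 ≤ (i + 1) / Nat.gcd (i + 1) (j + 1) :=
        (Nat.one_le_div_iff hgpos).mpr (Nat.gcd_le_left _ (Nat.succ_pos i))
      have hj0 : e.neg j ≠ 0 := by
        intro h0; exact hne (by rw [h0, zero_pow (by omega)])
      exact Finset.le_sup (f := id) (Finsupp.mem_support_iff.mpr hj0)
    have hlt : (i + 1) / Nat.gcd (i + 1) (j + 1) < n := by
      by_contra hge
      exact hne (hn _ (e.neg_mem j) _ (le_of_not_gt hge))
    have hdiv : (i + 1) / (j + 1) ≤ (i + 1) / Nat.gcd (i + 1) (j + 1) :=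
      Nat.div_le_div_left (Nat.gcd_le_right _ (Nat.succ_pos j)) hgpos
    have hib : i + 1 < n * (j + 1) :=
      (Nat.div_lt_iff_lt_mul (Nat.succ_pos j)).mp (lt_of_le_of_lt hdiv hlt)
    constructor
    · apply Finset.mem_range.mpr
      have : n * (j + 1) ≤ n * (J + 1) := Nat.mul_le_mul_left n (by omega)
      omega
    · apply Finset.mem_range.mpr
      have : J + 1 ≤ n * (J + 1) := Nat.le_mul_of_pos_left _ hn1
      omega
  refine double_finprod_pair _ _ (Finset.range M) ?_ ?_ ?_
  · intro i j h1
    refine key i j fun h0 => h1 ?_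
    simp only [h0, mul_zero, sub_zero]
    exact ringZPow_one_base _
  · intro i j h1
    have hkey := key j i (by
      intro h0
      apply h1
      rw [Nat.gcd_comm (j + 1) (i + 1)] at h0
      simp only [h0, zero_mul, sub_zero]
      exact ringZPow_one_base _)
    exact ⟨hkey.2, hkey.1⟩
  · intro i j
    have hb : 1 ≤ (i + 1) / Nat.gcd (i + 1) (j + 1) :=
      (Nat.one_le_div_iff (Nat.gcd_pos_of_pos_left _ (Nat.succ_pos i))).mpr
        (Nat.gcd_le_left _ (Nat.succ_pos i))
    have hnilp : IsNilpotent (d.pos i ^ ((j + 1) / Nat.gcd (i + 1) (j + 1))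
        * e.neg j ^ ((i + 1) / Nat.gcd (i + 1) (j + 1))) := by
      refine Commute.isNilpotent_mul_left (Commute.all _ _) ?_
      exact IsNilpotent.pow_of_pos ⟨n, hn _ (e.neg_mem j) n le_rfl⟩ (by omega)
    have hu : IsUnit (1 - d.pos i ^ ((j + 1) / Nat.gcd (i + 1) (j + 1))
        * e.neg j ^ ((i + 1) / Nat.gcd (i + 1) (j + 1))) := hnilp.isUnit_one_sub
    have := ringZPow_mul_ringZPow_neg hu (Nat.gcd (i + 1) (j + 1) : ℤ)
    rw [Nat.gcd_comm (j + 1) (i + 1),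
      mul_comm (e.neg j ^ ((i + 1) / Nat.gcd (i + 1) (j + 1)))]
    exact this

lemma symbol_mul_symbol (d e : CCData A) : d.symbol e * e.symbol d = 1 := by
  unfold CCData.symbol
  refine mul5 ?_ ?_ ?_ ?_ ?_
  · rw [mul_comm e.w d.w]; exact ringZPow_neg_one_sq _
  · exact ringZPow_mul_ringZPow_neg d.a0.isUnit e.w
  · rw [mul_comm]
    exact ringZPow_mul_ringZPow_neg e.a0.isUnit d.w
  · exact pairing d e
  · have := pairing e d
    rw [mul_comm] at this
    exact this

end Main

/-- The alternating property of the Contou-Carrère symbol (Definition 4.6):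
`⟨f, g⟩ · ⟨g, f⟩ = 1` for all units `f`, `g` of `A((t))` over a local Artinian ring
with perfect residue field. -/
theorem stmt10 {A : Type*} [CommRing A] [IsLocalRing A] [IsArtinianRing A]
    [PerfectField (IsLocalRing.ResidueField A)] :
    ∀ f g : LaurentSeries A, IsUnit f → IsUnit g →
      ccSymbol A f g * ccSymbol A g f = 1 := by
  classical
  intro f g _ _
  unfold ccSymbol
  by_cases h : (∃ d : CCData A, d.IsDecompositionOf f) ∧
      (∃ e : CCData A, e.IsDecompositionOf g)
  · have h' : (∃ d : CCData A, d.IsDecompositionOf g) ∧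
        (∃ e : CCData A, e.IsDecompositionOf f) := ⟨h.2, h.1⟩
    rw [dif_pos h, dif_pos h']
    exact symbol_mul_symbol h.1.choose h.2.choose
  · rw [dif_neg h, dif_neg (fun h' => h ⟨h'.2, h'.1⟩), mul_one]
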